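/- Inverse transformation of the wave equation: let v : ℝ² → ℝ be twice continuously differentiable on Q = (0,1) × (0,T) and satisfy, for all (y,t) ∈ Q, ∂ₜₜv(y,t) − (2ky/(1+kt)) ∂ₜ∂_y v(y,t) + (2k²y/(1+kt)²) ∂_y v(y,t) − ((1 − k²y²)/(1+kt)²) ∂_y∂_y v(y,t) = 0. Define u(x,t) = v(x/(1+kt), t). Then u satisfies the wave equation ∂ₜₜu(x,t) − ∂ₓₓu(x,t) = 0 for all (x,t) ∈ Q̂. -/

import Mathlib

set_option maxHeartbeats 2000000


/-- Inverse transformation of the wave equation: if v is C² on Q = (0,1) × (0,T) and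
satisfies v_tt − (2ky/(1+kt)) v_ty + (2k²y/(1+kt)²) v_y − ((1 − k²y²)/(1+kt)²) v_yy = 0
there, then u(x,t) = v(x/(1+kt), t) satisfies u_tt − u_xx = 0 on
Q̂ = {(x,t) : 0 < t < T, 0 < x < 1+kt}. -/
theorem wave_equation_inverse_transformation
    (T k : ℝ) (hT : 0 < T) (hk0 : 0 < k) (hk1 : k < 1)
    (Qhat : Set (ℝ × ℝ))
    (hQhat : Qhat = {p : ℝ × ℝ | 0 < p.2 ∧ p.2 < T ∧ 0 < p.1 ∧ p.1 < 1 + k * p.2})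
    (v : ℝ × ℝ → ℝ)
    (hv : ContDiffOn ℝ 2 v (Set.Ioo (0 : ℝ) 1 ×ˢ Set.Ioo (0 : ℝ) T))
    (heq : ∀ q ∈ Set.Ioo (0 : ℝ) 1 ×ˢ Set.Ioo (0 : ℝ) T,
      deriv (deriv (fun τ => v (q.1, τ))) q.2
        - (2 * k * q.1 / (1 + k * q.2)) *
            deriv (fun τ => deriv (fun η => v (η, τ)) q.1) q.2
        + (2 * k ^ 2 * q.1 / (1 + k * q.2) ^ 2) * deriv (fun η => v (η, q.2)) q.1
        - ((1 - k ^ 2 * q.1 ^ 2) / (1 + k * q.2) ^ 2) *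
            deriv (deriv (fun η => v (η, q.2))) q.1 = 0)
    (u : ℝ × ℝ → ℝ) (hu : u = fun p => v (p.1 / (1 + k * p.2), p.2)) :
    ∀ p ∈ Qhat,
      deriv (deriv (fun τ => u (p.1, τ))) p.2 -
        deriv (deriv (fun ξ => u (ξ, p.2))) p.1 = 0 := by
  subst hQhat
  rintro ⟨x, t⟩ hp
  obtain ⟨ht0, htT, hx0, hxα⟩ := hp
  simp only at ht0 htT hx0 hxα
  simp only [hu]
  set U : Set (ℝ × ℝ) := Set.Ioo (0:ℝ) 1 ×ˢ Set.Ioo (0:ℝ) T with hUdef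
  have hU : IsOpen U := isOpen_Ioo.prod isOpen_Ioo
  have hα : 0 < 1 + k * t := by nlinarith
  set y : ℝ := x / (1 + k * t) with hy_def
  have hy1 : 0 < y := div_pos hx0 hα
  have hy2 : y < 1 := (div_lt_one hα).2 hxα
  have hq : ((y, t) : ℝ × ℝ) ∈ U := ⟨⟨hy1, hy2⟩, ht0, htT⟩
  set f' : ℝ × ℝ → (ℝ × ℝ →L[ℝ] ℝ) := fun q => fderiv ℝ v q with hf'def
  have hvd : ∀ q' ∈ U, HasFDerivAt v (f' q') q' := fun q' hq' =>
    ((hv.differentiableOn (by norm_num)).differentiableAt (hU.mem_nhds hq')).hasFDerivAt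
  have hv1 : ContDiffOn ℝ 1 f' U := hv.fderiv_of_isOpen hU (by norm_num)
  set B := fderiv ℝ f' (y, t) with hBdef
  have hf'' : HasFDerivAt f' B (y, t) :=
    ((hv1.differentiableOn one_ne_zero).differentiableAt (hU.mem_nhds hq)).hasFDerivAt
  have hsym : ∀ a b, B a b = B b a :=
    (hv.contDiffAt (hU.mem_nhds hq)).isSymmSndFDerivAt (by norm_num)
  -- derivative of v along a curve
  have D1 : ∀ (γ : ℝ → ℝ × ℝ) (m : ℝ × ℝ) (τ : ℝ), γ τ ∈ U → HasDerivAt γ m τ →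
      HasDerivAt (fun s => v (γ s)) (f' (γ τ) m) τ := fun γ m τ hmem hγ =>
    (hvd _ hmem).comp_hasDerivAt τ hγ
  -- derivative of f' (applied to a fixed vector) along a curve through (y,t)
  have D2 : ∀ (γ : ℝ → ℝ × ℝ) (m w0 : ℝ × ℝ) (τ : ℝ), γ τ = (y, t) → HasDerivAt γ m τ →
      HasDerivAt (fun s => f' (γ s) w0) (B m w0) τ := by
    intro γ m w0 τ hγq hγ
    have h1 : HasDerivAt (fun s => f' (γ s)) (B m) τ := by
      have hB : HasFDerivAt f' B (γ τ) := hγq ▸ hf''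
      exact hB.comp_hasDerivAt τ hγ
    have h2 := h1.clm_apply (hasDerivAt_const τ w0)
    simpa using h2
  have curve1 : ∀ τ η : ℝ, HasDerivAt (fun η' => ((η', τ) : ℝ × ℝ)) ((1:ℝ), (0:ℝ)) η :=
    fun τ η => (hasDerivAt_id η).prodMk (hasDerivAt_const η τ)
  have curve2 : ∀ τ : ℝ, HasDerivAt (fun τ' => ((y, τ') : ℝ × ℝ)) ((0:ℝ), (1:ℝ)) τ :=
    fun τ => (hasDerivAt_const τ y).prodMk (hasDerivAt_id τ)
  -- quantity 2 : v_y
  have q2 : deriv (fun η => v (η, t)) y = f' (y, t) (1, 0) :=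
    (D1 (fun η => (η, t)) (1, 0) y hq (curve1 t y)).deriv
  -- quantity 1 : v_yy
  have q1 : deriv (deriv (fun η => v (η, t))) y = B (0, 1) (1, 0) → True := fun _ => trivial
  have ev1 : deriv (fun η => v (η, t)) =ᶠ[nhds y] fun η => f' (η, t) ((1:ℝ), (0:ℝ)) := by
    filter_upwards [Ioo_mem_nhds hy1 hy2] with η hη
    exact (D1 (fun η' => (η', t)) (1, 0) η ⟨hη, ht0, htT⟩ (curve1 t η)).deriv
  have qyy : deriv (deriv (fun η => v (η, t))) y = B (1, 0) (1, 0) := by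
    rw [ev1.deriv_eq]
    exact (D2 (fun η => (η, t)) (1, 0) (1, 0) y rfl (curve1 t y)).deriv
  -- quantity 3 : v_ty (mixed)
  have ev3 : (fun τ => deriv (fun η => v (η, τ)) y) =ᶠ[nhds t]
      fun τ => f' (y, τ) ((1:ℝ), (0:ℝ)) := by
    filter_upwards [Ioo_mem_nhds ht0 htT] with τ hτ
    exact (D1 (fun η => (η, τ)) (1, 0) y ⟨⟨hy1, hy2⟩, hτ⟩ (curve1 τ y)).deriv
  have qty : deriv (fun τ => deriv (fun η => v (η, τ)) y) t = B (0, 1) (1, 0) := by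
    rw [ev3.deriv_eq]
    exact (D2 (fun τ => (y, τ)) (0, 1) (1, 0) t rfl (curve2 t)).deriv
  -- quantity 4 : v_tt
  have ev4 : deriv (fun τ => v (y, τ)) =ᶠ[nhds t] fun τ => f' (y, τ) ((0:ℝ), (1:ℝ)) := by
    filter_upwards [Ioo_mem_nhds ht0 htT] with τ hτ
    exact (D1 (fun τ' => (y, τ')) (0, 1) τ ⟨⟨hy1, hy2⟩, hτ⟩ (curve2 τ)).deriv
  have qtt : deriv (deriv (fun τ => v (y, τ))) t = B (0, 1) (0, 1) := by
    rw [ev4.deriv_eq]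
    exact (D2 (fun τ => (y, τ)) (0, 1) (0, 1) t rfl (curve2 t)).deriv
  -- u_xx
  have curve3 : ∀ ξ : ℝ, HasDerivAt (fun ξ' => ((ξ' / (1 + k * t), t) : ℝ × ℝ))
      ((1 / (1 + k * t) : ℝ), (0:ℝ)) ξ :=
    fun ξ => ((hasDerivAt_id ξ).div_const (1 + k * t)).prodMk (hasDerivAt_const ξ t)
  have evx : deriv (fun ξ => v (ξ / (1 + k * t), t)) =ᶠ[nhds x]
      fun ξ => f' (ξ / (1 + k * t), t) ((1 / (1 + k * t) : ℝ), (0:ℝ)) := by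
    filter_upwards [Ioo_mem_nhds hx0 hxα] with ξ hξ
    exact (D1 (fun ξ' => (ξ' / (1 + k * t), t)) (1 / (1 + k * t), 0) ξ
      ⟨⟨div_pos hξ.1 hα, (div_lt_one hα).2 hξ.2⟩, ht0, htT⟩ (curve3 ξ)).deriv
  have uxx : deriv (deriv (fun ξ => v (ξ / (1 + k * t), t))) x
      = B (1 / (1 + k * t), 0) (1 / (1 + k * t), 0) := by
    rw [evx.deriv_eq]
    exact (D2 (fun ξ' => (ξ' / (1 + k * t), t)) (1 / (1 + k * t), 0)
      (1 / (1 + k * t), 0) x rfl (curve3 x)).deriv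
  -- u_tt
  have hlin : ∀ τ : ℝ, HasDerivAt (fun τ' => 1 + k * τ') k τ := by
    intro τ
    simpa using (HasDerivAt.const_mul k (hasDerivAt_id τ)).const_add 1
  have hfirst : ∀ τ : ℝ, 0 < 1 + k * τ →
      HasDerivAt (fun τ' => x / (1 + k * τ')) (-(x * k) / (1 + k * τ) ^ 2) τ := by
    intro τ hpos
    have h := (hasDerivAt_const τ x).div (hlin τ) hpos.ne'
    refine h.congr_deriv ?_
    ring
  have curve4 : ∀ τ : ℝ, 0 < 1 + k * τ →
      HasDerivAt (fun τ' => ((x / (1 + k * τ'), τ') : ℝ × ℝ))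
        ((-(x * k) / (1 + k * τ) ^ 2, 1) : ℝ × ℝ) τ :=
    fun τ hpos => (hfirst τ hpos).prodMk (hasDerivAt_id τ)
  have hSmem : {τ : ℝ | 0 < τ ∧ τ < T ∧ x < 1 + k * τ} ∈ nhds t := by
    have h1 : IsOpen {τ : ℝ | 0 < τ} := isOpen_lt continuous_const continuous_id
    have h2 : IsOpen {τ : ℝ | τ < T} := isOpen_lt continuous_id continuous_const
    have h3 : IsOpen {τ : ℝ | x < 1 + k * τ} :=
      isOpen_lt continuous_const (continuous_const.add (continuous_const.mul continuous_id))
    have : IsOpen ({τ : ℝ | 0 < τ} ∩ ({τ : ℝ | τ < T} ∩ {τ : ℝ | x < 1 + k * τ})) :=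
      h1.inter (h2.inter h3)
    exact this.mem_nhds ⟨ht0, htT, hxα⟩
  have evt : deriv (fun τ => v (x / (1 + k * τ), τ)) =ᶠ[nhds t]
      fun τ => f' (x / (1 + k * τ), τ) ((-(x * k) / (1 + k * τ) ^ 2, 1) : ℝ × ℝ) := by
    filter_upwards [hSmem] with τ hτ
    obtain ⟨hτ0, hτT, hτx⟩ := hτ
    have hpos : 0 < 1 + k * τ := by nlinarith
    exact (D1 (fun τ' => (x / (1 + k * τ'), τ')) (-(x * k) / (1 + k * τ) ^ 2, 1) τ
      ⟨⟨div_pos hx0 hpos, (div_lt_one hpos).2 hτx⟩, hτ0, hτT⟩ (curve4 τ hpos)).deriv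
  -- the derivative of the coefficient -(x*k)/(1+k*τ)^2 at t
  have hW : HasDerivAt (fun τ => -(x * k) / (1 + k * τ) ^ 2)
      (2 * k ^ 2 * x / (1 + k * t) ^ 3) t := by
    have hsq : HasDerivAt (fun τ => (1 + k * τ) ^ 2)
        ((2 : ℕ) * (1 + k * t) ^ 1 * k) t := (hlin t).pow 2
    have h := (hasDerivAt_const t (-(x * k))).div hsq (by positivity)
    refine h.congr_deriv ?_
    field_simp
    ring
  have utt : deriv (deriv (fun τ => v (x / (1 + k * τ), τ))) t
      = B (-(x * k) / (1 + k * t) ^ 2, 1) (-(x * k) / (1 + k * t) ^ 2, 1)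
        + f' (y, t) (2 * k ^ 2 * x / (1 + k * t) ^ 3, 0) := by
    rw [evt.deriv_eq]
    have hc : HasDerivAt (fun τ => f' (x / (1 + k * τ), τ))
        (B (-(x * k) / (1 + k * t) ^ 2, 1)) t := by
      exact hf''.comp_hasDerivAt_of_eq t (curve4 t hα) (by rw [hy_def])
    have hw : HasDerivAt (fun τ => ((-(x * k) / (1 + k * τ) ^ 2, 1) : ℝ × ℝ))
        ((2 * k ^ 2 * x / (1 + k * t) ^ 3, 0) : ℝ × ℝ) t :=
      hW.prodMk (hasDerivAt_const t (1:ℝ))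
    have := (hc.clm_apply hw).deriv
    simpa [hy_def] using this
  -- linearity helpers
  have eps : ∀ c d : ℝ, ((c, d) : ℝ × ℝ) = c • ((1:ℝ), (0:ℝ)) + d • ((0:ℝ), (1:ℝ)) := by
    intro c d
    simp [Prod.ext_iff]
  have lin : ∀ (L : ℝ × ℝ →L[ℝ] ℝ) (c d : ℝ), L (c, d) = c * L (1, 0) + d * L (0, 1) := by
    intro L c d
    rw [eps c d, map_add, map_smul, map_smul]
    simp only [smul_eq_mul]
  have lin2 : ∀ (c d : ℝ) (w : ℝ × ℝ), B (c, d) w = c * B (1, 0) w + d * B (0, 1) w := by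
    intro c d w
    rw [eps c d, map_add, map_smul, map_smul]
    simp only [ContinuousLinearMap.add_apply, ContinuousLinearMap.coe_smul',
      Pi.smul_apply, smul_eq_mul]
  have e1 : B (-(x * k) / (1 + k * t) ^ 2, 1) (-(x * k) / (1 + k * t) ^ 2, 1)
      = (-(x * k) / (1 + k * t) ^ 2) ^ 2 * B (1, 0) (1, 0)
        + 2 * (-(x * k) / (1 + k * t) ^ 2) * B (0, 1) (1, 0) + B (0, 1) (0, 1) := by
    rw [lin2 (-(x * k) / (1 + k * t) ^ 2) 1 ((-(x * k) / (1 + k * t) ^ 2, 1) : ℝ × ℝ),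
      lin (B (1, 0)) (-(x * k) / (1 + k * t) ^ 2) 1,
      lin (B (0, 1)) (-(x * k) / (1 + k * t) ^ 2) 1,
      hsym (1, 0) (0, 1)]
    ring
  have e2 : B (1 / (1 + k * t), 0) (1 / (1 + k * t), 0)
      = (1 / (1 + k * t)) ^ 2 * B (1, 0) (1, 0) := by
    rw [lin2 (1 / (1 + k * t)) 0 ((1 / (1 + k * t), 0) : ℝ × ℝ),
      lin (B (1, 0)) (1 / (1 + k * t)) 0,
      lin (B (0, 1)) (1 / (1 + k * t)) 0]
    ring
  have e3 : f' (y, t) (2 * k ^ 2 * x / (1 + k * t) ^ 3, 0)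
      = (2 * k ^ 2 * x / (1 + k * t) ^ 3) * f' (y, t) (1, 0) := by
    rw [lin (f' (y, t)) (2 * k ^ 2 * x / (1 + k * t) ^ 3) 0]
    ring
  have heq' := heq (y, t) hq
  simp only at heq'
  rw [qtt, qty, q2, qyy] at heq'
  rw [utt, uxx, e1, e2, e3]
  rw [hy_def] at heq'
  have hne : (1 + k * t) ≠ 0 := hα.ne'
  have key : (1 + k * t) ^ 4 * B (0, 1) (0, 1) - 2 * k * x * (1 + k * t) ^ 2 * B (0, 1) (1, 0)
      + 2 * k ^ 2 * x * (1 + k * t) * f' (y, t) (1, 0)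
      - ((1 + k * t) ^ 2 - k ^ 2 * x ^ 2) * B (1, 0) (1, 0) = 0 := by
    have h2 : (1 + k * t) ^ 4 *
        (B (0, 1) (0, 1)
          - 2 * k * (x / (1 + k * t)) / (1 + k * t) * B (0, 1) (1, 0)
          + 2 * k ^ 2 * (x / (1 + k * t)) / (1 + k * t) ^ 2 * f' (y, t) (1, 0)
          - (1 - k ^ 2 * (x / (1 + k * t)) ^ 2) / (1 + k * t) ^ 2 * B (1, 0) (1, 0)) = 0 := by
      rw [heq']; ring
    calc (1 + k * t) ^ 4 * B (0, 1) (0, 1) - 2 * k * x * (1 + k * t) ^ 2 * B (0, 1) (1, 0)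
          + 2 * k ^ 2 * x * (1 + k * t) * f' (y, t) (1, 0)
          - ((1 + k * t) ^ 2 - k ^ 2 * x ^ 2) * B (1, 0) (1, 0)
        = (1 + k * t) ^ 4 *
          (B (0, 1) (0, 1)
            - 2 * k * (x / (1 + k * t)) / (1 + k * t) * B (0, 1) (1, 0)
            + 2 * k ^ 2 * (x / (1 + k * t)) / (1 + k * t) ^ 2 * f' (y, t) (1, 0)
            - (1 - k ^ 2 * (x / (1 + k * t)) ^ 2) / (1 + k * t) ^ 2 * B (1, 0) (1, 0)) := by
          field_simp
      _ = 0 := h2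
  have hG : (-(x * k) / (1 + k * t) ^ 2) ^ 2 * B (1, 0) (1, 0)
        + 2 * (-(x * k) / (1 + k * t) ^ 2) * B (0, 1) (1, 0) + B (0, 1) (0, 1)
        + 2 * k ^ 2 * x / (1 + k * t) ^ 3 * f' (y, t) (1, 0)
        - (1 / (1 + k * t)) ^ 2 * B (1, 0) (1, 0)
      = ((1 + k * t) ^ 4)⁻¹ *
        ((1 + k * t) ^ 4 * B (0, 1) (0, 1) - 2 * k * x * (1 + k * t) ^ 2 * B (0, 1) (1, 0)
          + 2 * k ^ 2 * x * (1 + k * t) * f' (y, t) (1, 0)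
          - ((1 + k * t) ^ 2 - k ^ 2 * x ^ 2) * B (1, 0) (1, 0)) := by
    field_simp
    ring
  rw [hG, key, mul_zero]
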